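/- arXiv:1408.6879 — 4 statements merged into one kernel-verified Lean document; each statement's English description precedes it below -/
import Mathlib

section
/- (Finsler's lemma, null-space form) Let Q ∈ ℝ^{n×n} be symmetric and B ∈ ℝ^{m×n} with rank(B) = m < n. Let B⊥ ∈ ℝ^{n×(n−m)} be a matrix whose columns form a basis of the kernel of B. Then B⊥ᵀ Q B⊥ is negative definite if and only if there exists a matrix M ∈ ℝ^{n×m} such that Q + MB + BᵀMᵀ is negative definite. -/
open Matrix

section Aux

variable {n m : ℕ}

private lemma finsler_cong (Bperp : Matrix (Fin n) (Fin (n - m)) ℝ)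
    (Q : Matrix (Fin n) (Fin n) ℝ) (y : Fin (n - m) → ℝ) :
    y ⬝ᵥ (Bperpᵀ * Q * Bperp) *ᵥ y = (Bperp *ᵥ y) ⬝ᵥ Q *ᵥ (Bperp *ᵥ y) := by
  rw [← mulVec_mulVec, ← mulVec_mulVec, dotProduct_mulVec y Bperpᵀ, vecMul_transpose]

end Aux

/-- Finsler's lemma, null-space form.  `B` has full row rank `m < n`, and the columns of
`Bperp` form a basis of the kernel of `B`.  Then `Bperpᵀ Q Bperp ≺ 0` iff there is a
multiplier `M` with `Q + MB + BᵀMᵀ ≺ 0`. -/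
theorem finsler_lemma {n m : ℕ} (hmn : m < n)
    (Q : Matrix (Fin n) (Fin n) ℝ) (hQ : Q.IsSymm)
    (B : Matrix (Fin m) (Fin n) ℝ) (hB : B.rank = m)
    (Bperp : Matrix (Fin n) (Fin (n - m)) ℝ)
    (hker : B * Bperp = 0) (hBperp : Bperp.rank = n - m) :
    (-(Bperpᵀ * Q * Bperp)).PosDef ↔
      ∃ M : Matrix (Fin n) (Fin m) ℝ, (-(Q + M * B + Bᵀ * Mᵀ)).PosDef := by
  set f : (Fin n → ℝ) → ℝ := fun x => x ⬝ᵥ Q *ᵥ x with hf_def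
  set g : (Fin n → ℝ) → ℝ := fun x => (B *ᵥ x) ⬝ᵥ (B *ᵥ x) with hg_def
  -- Bperp has trivial kernel
  have hinj : Function.Injective Bperp.mulVecLin := by
    rw [← LinearMap.ker_eq_bot, ← Submodule.finrank_eq_zero (R := ℝ)]
    have h1 := Bperp.mulVecLin.finrank_range_add_finrank_ker
    rw [Module.finrank_pi] at h1
    have h2 : Bperp.rank = Module.finrank ℝ (LinearMap.range Bperp.mulVecLin) := rfl
    simp only [Fintype.card_fin] at h1
    omega
  -- range of Bperp = kernel of B
  have hrange : LinearMap.range Bperp.mulVecLin = LinearMap.ker B.mulVecLin := by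
    apply Submodule.eq_of_le_of_finrank_eq
    · rintro x ⟨y, rfl⟩
      simp only [LinearMap.mem_ker, mulVecLin_apply, mulVec_mulVec, hker, zero_mulVec]
    · have h1 := B.mulVecLin.finrank_range_add_finrank_ker
      rw [Module.finrank_pi] at h1
      have h2 : B.rank = Module.finrank ℝ (LinearMap.range B.mulVecLin) := rfl
      have h3 : Bperp.rank = Module.finrank ℝ (LinearMap.range Bperp.mulVecLin) := rfl
      simp only [Fintype.card_fin] at h1
      omega
  have hg0 : ∀ x, 0 ≤ g x := fun x =>
    Finset.sum_nonneg fun i _ => mul_self_nonneg _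
  constructor
  · intro h
    -- negative on kernel of B
    have hneg : ∀ x, B *ᵥ x = 0 → x ≠ 0 → f x < 0 := by
      intro x hBx hx
      have hx_mem : x ∈ LinearMap.range Bperp.mulVecLin := by
        rw [hrange]; simpa [LinearMap.mem_ker, mulVecLin_apply] using hBx
      obtain ⟨y, hy⟩ := hx_mem
      have hy0 : y ≠ 0 := by
        rintro rfl; apply hx; rw [← hy]; simp
      have := h.dotProduct_mulVec_pos hy0
      rw [star_trivial, neg_mulVec, dotProduct_neg, finsler_cong] at this
      rw [mulVecLin_apply] at hy
      rw [hy] at this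
      simpa [hf_def] using this
    -- continuity
    have hf_cont : Continuous f := by
      have : Continuous fun x : Fin n → ℝ => x ⬝ᵥ Q *ᵥ x := by
        simp only [dotProduct, mulVec]
        exact continuous_finset_sum _ fun i _ => (continuous_apply i).mul
          (continuous_finset_sum _ fun j _ => continuous_const.mul (continuous_apply j))
      exact this
    have hg_cont : Continuous g := by
      have : Continuous fun x : Fin n → ℝ => (B *ᵥ x) ⬝ᵥ (B *ᵥ x) := by
        simp only [dotProduct, mulVec]
        exact continuous_finset_sum _ fun i _ =>
          ((continuous_finset_sum _ fun j _ => continuous_const.mul (continuous_apply j)).mul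
            (continuous_finset_sum _ fun j _ => continuous_const.mul (continuous_apply j)))
      exact this
    -- compactness argument for the multiplier
    set S : Set (Fin n → ℝ) := Metric.sphere 0 1 with hS_def
    have hS : IsCompact S := isCompact_sphere 0 1
    set K : Set (Fin n → ℝ) := S ∩ {x | 0 ≤ f x} with hK_def
    have hKc : IsCompact K := hS.inter_right (isClosed_Ici.preimage hf_cont)
    have hKg : ∀ x ∈ K, 0 < g x := by
      rintro x ⟨hxS, hxf⟩
      have hx0 : x ≠ 0 := by
        intro h0
        rw [Metric.mem_sphere, dist_zero_right, h0, norm_zero] at hxS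
        norm_num at hxS
      rcases (hg0 x).lt_or_eq with h | h
      · exact h
      · exfalso
        have hBx : B *ᵥ x = 0 := dotProduct_self_eq_zero.mp h.symm
        exact absurd (hneg x hBx hx0) (not_lt.mpr hxf)
    obtain ⟨σ, hσpos, hσ⟩ : ∃ σ : ℝ, 0 < σ ∧ ∀ x ∈ S, f x < σ * g x := by
      rcases K.eq_empty_or_nonempty with hKe | hKne
      · refine ⟨1, one_pos, fun x hxS => ?_⟩
        have hxK : x ∉ K := by rw [hKe]; exact Set.notMem_empty x
        have hfx : f x < 0 := by
          by_contra hc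
          exact hxK ⟨hxS, not_lt.mp hc⟩
        calc f x < 0 := hfx
          _ ≤ 1 * g x := by simpa using hg0 x
      · obtain ⟨a, haK, hga⟩ := hKc.exists_isMinOn hKne hg_cont.continuousOn
        obtain ⟨b, hbK, hfb⟩ := hKc.exists_isMaxOn hKne hf_cont.continuousOn
        have hεg : 0 < g a := hKg a haK
        have hCf : 0 ≤ f b := hbK.2
        refine ⟨f b / g a + 1, by positivity, fun x hxS => ?_⟩
        by_cases hxf : 0 ≤ f x
        · have hxK : x ∈ K := ⟨hxS, hxf⟩
          have h1 : f x ≤ f b := hfb hxK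
          have h2 : g a ≤ g x := hga hxK
          have h3 : f b / g a * g a = f b := div_mul_cancel₀ _ (ne_of_gt hεg)
          nlinarith [mul_nonneg (div_nonneg hCf hεg.le) (sub_nonneg.2 h2)]
        · have hfx : f x < 0 := not_le.mp hxf
          have : 0 ≤ (f b / g a + 1) * g x :=
            mul_nonneg (by positivity) (hg0 x)
          linarith
    -- extend the bound to all nonzero vectors by homogeneity
    have hall : ∀ x : Fin n → ℝ, x ≠ 0 → f x < σ * g x := by
      intro x hx
      have hnx : 0 < ‖x‖ := norm_pos_iff.mpr hx
      set c : ℝ := ‖x‖⁻¹ with hc_def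
      have hc : 0 < c := by positivity
      have hu : (c • x) ∈ S := by
        rw [hS_def, Metric.mem_sphere, dist_zero_right]
        exact norm_smul_inv_norm (𝕜 := ℝ) hx
      have hfu : f (c • x) = c * (c * f x) := by
        simp [hf_def, mulVec_smul, smul_dotProduct, dotProduct_smul, smul_eq_mul]
      have hgu : g (c • x) = c * (c * g x) := by
        simp [hg_def, mulVec_smul, smul_dotProduct, dotProduct_smul, smul_eq_mul]
      have h := hσ (c • x) hu
      rw [hfu, hgu] at h
      have hcc : 0 < c * c := mul_pos hc hc
      nlinarith
    -- construct the multiplier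
    refine ⟨(-(σ/2)) • Bᵀ, posDef_iff_dotProduct_mulVec.mpr ⟨?_, ?_⟩⟩
    · -- hermitian
      rw [IsHermitian, conjTranspose_eq_transpose_of_trivial]
      simp only [transpose_neg, transpose_add, transpose_mul, transpose_smul,
        transpose_transpose, hQ.eq]
      ring_nf
      abel_nf
    · intro x hx
      rw [star_trivial]
      have key : x ⬝ᵥ (-(Q + (-(σ/2)) • Bᵀ * B + Bᵀ * ((-(σ/2)) • Bᵀ)ᵀ)) *ᵥ x
          = σ * g x - f x := by
        have e1 : x ⬝ᵥ ((-(σ/2)) • Bᵀ * B) *ᵥ x = (-(σ/2)) * g x := by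
          rw [Matrix.smul_mul, smul_mulVec, dotProduct_smul, ← mulVec_mulVec,
            dotProduct_mulVec, vecMul_transpose]
          simp [hg_def, smul_eq_mul]
        have e2 : x ⬝ᵥ (Bᵀ * ((-(σ/2)) • Bᵀ)ᵀ) *ᵥ x = (-(σ/2)) * g x := by
          rw [transpose_smul, transpose_transpose, Matrix.mul_smul, smul_mulVec,
            dotProduct_smul, ← mulVec_mulVec, dotProduct_mulVec, vecMul_transpose]
          simp [hg_def, smul_eq_mul]
        rw [neg_mulVec, dotProduct_neg, add_mulVec, add_mulVec, dotProduct_add,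
          dotProduct_add, e1, e2]
        simp only [hf_def]
        ring
      rw [key]
      have := hall x hx
      linarith
  · rintro ⟨M, hM⟩
    rw [posDef_iff_dotProduct_mulVec]
    constructor
    · rw [IsHermitian, conjTranspose_eq_transpose_of_trivial]
      simp only [transpose_neg, transpose_mul, transpose_transpose, hQ.eq]
      rw [Matrix.mul_assoc]
    · intro y hy
      rw [star_trivial]
      set x : Fin n → ℝ := Bperp *ᵥ y with hx_def
      have hx0 : x ≠ 0 := by
        intro h0
        apply hy
        apply hinj
        simpa [mulVecLin_apply, ← hx_def] using h0
      have hBx : B *ᵥ x = 0 := by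
        rw [hx_def, mulVec_mulVec, hker, zero_mulVec]
      have hpos := hM.dotProduct_mulVec_pos hx0
      rw [star_trivial, neg_mulVec, dotProduct_neg, add_mulVec, add_mulVec,
        dotProduct_add, dotProduct_add] at hpos
      have e1 : x ⬝ᵥ (M * B) *ᵥ x = 0 := by
        rw [← mulVec_mulVec, hBx, mulVec_zero, dotProduct_zero]
      have e2 : x ⬝ᵥ (Bᵀ * Mᵀ) *ᵥ x = 0 := by
        have hxB : x ᵥ* Bᵀ = 0 := by rw [vecMul_transpose, hBx]
        rw [dotProduct_mulVec, ← vecMul_vecMul, hxB, zero_vecMul, zero_dotProduct]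
      rw [e1, e2] at hpos
      rw [neg_mulVec, dotProduct_neg, finsler_cong, ← hx_def]
      linarith [hpos]
end

section
/- (Elimination lemma, two-constraint form) Let Q ∈ ℝ^{n×n} be symmetric, and let B, C be real matrices with n columns, each of full row rank. Denote by B⊥ and C⊥ matrices whose columns form bases of the kernels of B and C respectively. Then both B⊥ᵀ Q B⊥ ≺ 0 and C⊥ᵀ Q C⊥ ≺ 0 hold if and only if there exists a matrix V of appropriate dimensions such that Q + BᵀVC + CᵀVᵀB is negative definite. -/
open Matrix

private lemma elim_dot_symm {n : ℕ} (Q : Matrix (Fin n) (Fin n) ℝ) (hQ : Q.IsSymm) (u w : Fin n → ℝ) :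
    u ⬝ᵥ Q *ᵥ w = w ⬝ᵥ Q *ᵥ u := by
  rw [Matrix.dotProduct_mulVec, ← Matrix.vecMul_transpose, hQ.eq, dotProduct_comm]

private lemma elim_sandwich {m e a d : ℕ} (A : Matrix (Fin a) (Fin m) ℝ) (N : Matrix (Fin a) (Fin d) ℝ)
    (D : Matrix (Fin d) (Fin e) ℝ) (u : Fin m → ℝ) (w : Fin e → ℝ) :
    u ⬝ᵥ (Aᵀ * N * D) *ᵥ w = (A *ᵥ u) ⬝ᵥ N *ᵥ (D *ᵥ w) := by
  rw [← Matrix.mulVec_mulVec, ← Matrix.mulVec_mulVec, Matrix.dotProduct_mulVec,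
    Matrix.vecMul_transpose]

private lemma elim_sandwich2 {m e a : ℕ} (A : Matrix (Fin a) (Fin m) ℝ) (D : Matrix (Fin a) (Fin e) ℝ)
    (u : Fin m → ℝ) (w : Fin e → ℝ) :
    u ⬝ᵥ (Aᵀ * D) *ᵥ w = (A *ᵥ u) ⬝ᵥ (D *ᵥ w) := by
  rw [← Matrix.mulVec_mulVec, Matrix.dotProduct_mulVec, Matrix.vecMul_transpose]

private lemma elim_expand {n : ℕ} (Q : Matrix (Fin n) (Fin n) ℝ) (hQ : Q.IsSymm) (s p t u : Fin n → ℝ)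
    (hsp : s ⬝ᵥ Q *ᵥ p = 0) (hst : s ⬝ᵥ Q *ᵥ t = 0) (hsu : s ⬝ᵥ Q *ᵥ u = 0) :
    (s + p + t + u) ⬝ᵥ Q *ᵥ (s + p + t + u) - 2 * ((t + u) ⬝ᵥ Q *ᵥ (p + u))
      = s ⬝ᵥ Q *ᵥ s + p ⬝ᵥ Q *ᵥ p + t ⬝ᵥ Q *ᵥ t - u ⬝ᵥ Q *ᵥ u := by
  have h1 := elim_dot_symm Q hQ p s
  have h2 := elim_dot_symm Q hQ t s
  have h3 := elim_dot_symm Q hQ u s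
  have h4 := elim_dot_symm Q hQ t p
  have h5 := elim_dot_symm Q hQ u p
  have h6 := elim_dot_symm Q hQ u t
  simp only [Matrix.mulVec_add, dotProduct_add, add_dotProduct] at *
  linarith

private lemma elim_bound {n : ℕ} (Q : Matrix (Fin n) (Fin n) ℝ) (v : Fin n → ℝ) :
    -((∑ i, ∑ j, |Q i j|) * (v ⬝ᵥ v)) ≤ v ⬝ᵥ Q *ᵥ v := by
  have hvv : ∀ i j : Fin n, |v i| * |v j| ≤ v ⬝ᵥ v := by
    intro i j
    have h1 : v i ^ 2 ≤ v ⬝ᵥ v := by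
      have := Finset.single_le_sum (f := fun k => v k * v k)
        (fun k _ => mul_self_nonneg (v k)) (Finset.mem_univ i)
      simpa [dotProduct, sq] using this
    have h2 : v j ^ 2 ≤ v ⬝ᵥ v := by
      have := Finset.single_le_sum (f := fun k => v k * v k)
        (fun k _ => mul_self_nonneg (v k)) (Finset.mem_univ j)
      simpa [dotProduct, sq] using this
    nlinarith [abs_nonneg (v i), abs_nonneg (v j), sq_abs (v i), sq_abs (v j),
      sq_nonneg (|v i| - |v j|)]
  have expand : v ⬝ᵥ Q *ᵥ v = ∑ i, ∑ j, v i * Q i j * v j := by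
    simp [dotProduct, Matrix.mulVec, Finset.mul_sum, mul_assoc]
  rw [expand, Finset.sum_mul, neg_le, ← Finset.sum_neg_distrib]
  apply Finset.sum_le_sum
  intro i _
  rw [Finset.sum_mul, ← Finset.sum_neg_distrib]
  apply Finset.sum_le_sum
  intro j _
  have h : |v i * Q i j * v j| ≤ |Q i j| * (v ⬝ᵥ v) := by
    rw [abs_mul, abs_mul]
    calc |v i| * |Q i j| * |v j| = |Q i j| * (|v i| * |v j|) := by ring
    _ ≤ |Q i j| * (v ⬝ᵥ v) := mul_le_mul_of_nonneg_left (hvv i j) (abs_nonneg _)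
  have := (abs_le.mp h).1
  linarith

private lemma elim_dot_transpose {b c : ℕ} (V : Matrix (Fin b) (Fin c) ℝ) (u : Fin b → ℝ)
    (w : Fin c → ℝ) : w ⬝ᵥ Vᵀ *ᵥ u = u ⬝ᵥ V *ᵥ w := by
  rw [Matrix.dotProduct_mulVec, Matrix.vecMul_transpose, dotProduct_comm]

private lemma elim_self_nonneg {n : ℕ} (v : Fin n → ℝ) : 0 ≤ v ⬝ᵥ v :=
  Finset.sum_nonneg fun _ _ => mul_self_nonneg _

private lemma elim_self_pos {n : ℕ} (v : Fin n → ℝ) (h : v ≠ 0) : 0 < v ⬝ᵥ v := by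
  have h1 : v ⬝ᵥ v ≠ 0 := fun hh => h (dotProduct_self_eq_zero.mp hh)
  cases (elim_self_nonneg v).lt_or_eq with
  | inl h2 => exact h2
  | inr h2 => exact absurd h2.symm h1

private noncomputable def projEndo {E : Type*} [AddCommGroup E] [Module ℝ E]
    (p q : Submodule ℝ E) (h : IsCompl p q) : E →ₗ[ℝ] E :=
  p.subtype ∘ₗ Submodule.projectionOnto p q h

private lemma projEndo_mem {E : Type*} [AddCommGroup E] [Module ℝ E]
    (p q : Submodule ℝ E) (h : IsCompl p q) (x : E) : projEndo p q h x ∈ p :=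
  Submodule.coe_mem _

private lemma projEndo_left {E : Type*} [AddCommGroup E] [Module ℝ E]
    (p q : Submodule ℝ E) (h : IsCompl p q) (x : E) (hx : x ∈ p) : projEndo p q h x = x := by
  have := Submodule.projectionOnto_apply_left h ⟨x, hx⟩
  simpa [projEndo] using congrArg (Subtype.val) this

private lemma projEndo_right {E : Type*} [AddCommGroup E] [Module ℝ E]
    (p q : Submodule ℝ E) (h : IsCompl p q) (x : E) (hx : x ∈ q) : projEndo p q h x = 0 := by
  have := Submodule.projectionOnto_apply_of_mem_right h hx
  simpa [projEndo] using congrArg (Subtype.val) this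

set_option maxHeartbeats 1000000 in
private lemma elim_forward {n b c : ℕ}
    (Q : Matrix (Fin n) (Fin n) ℝ) (hQ : Q.IsSymm)
    (B : Matrix (Fin b) (Fin n) ℝ) (hB : B.rank = b)
    (C : Matrix (Fin c) (Fin n) ℝ) (hC : C.rank = c)
    (Bperp : Matrix (Fin n) (Fin (n - b)) ℝ)
    (hBker : B * Bperp = 0) (hBperp : Bperp.rank = n - b)
    (Cperp : Matrix (Fin n) (Fin (n - c)) ℝ)
    (hCker : C * Cperp = 0) (hCperp : Cperp.rank = n - c)
    (hB1 : (-(Bperpᵀ * Q * Bperp)).PosDef) (hC1 : (-(Cperpᵀ * Q * Cperp)).PosDef) :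
    ∃ V : Matrix (Fin b) (Fin c) ℝ, (-(Q + Bᵀ * V * C + Cᵀ * Vᵀ * B)).PosDef := by
  classical
  -- negativity of the quadratic form on kernels
  have qneg : ∀ (k : ℕ) (D : Matrix (Fin k) (Fin n) ℝ), D.rank = k →
      ∀ (P : Matrix (Fin n) (Fin (n - k)) ℝ), D * P = 0 → P.rank = n - k →
      (-(Pᵀ * Q * P)).PosDef →
      ∀ x, x ∈ LinearMap.ker D.mulVecLin → x ≠ 0 → x ⬝ᵥ Q *ᵥ x < 0 := by
    intro k D hD P hk hP h1 x hx hx0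
    have hle : LinearMap.range P.mulVecLin ≤ LinearMap.ker D.mulVecLin := by
      rintro _ ⟨y, rfl⟩
      have : (D * P).mulVecLin y = 0 := by rw [hk]; simp
      rw [Matrix.mulVecLin_mul] at this
      exact this
    have hrange : LinearMap.range P.mulVecLin = LinearMap.ker D.mulVecLin := by
      apply Submodule.eq_of_le_of_finrank_eq hle
      have h2 := LinearMap.finrank_range_add_finrank_ker D.mulVecLin
      rw [Module.finrank_fin_fun] at h2
      have h3 : Module.finrank ℝ (LinearMap.range D.mulVecLin) = k := hD
      have h4 : Module.finrank ℝ (LinearMap.range P.mulVecLin) = n - k := hP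
      have h5 : k ≤ n := by
        have := D.rank_le_width
        omega
      omega
    rw [← hrange] at hx
    obtain ⟨y, rfl⟩ := hx
    have hy : y ≠ 0 := by rintro rfl; simp at hx0
    have hpos := h1.dotProduct_mulVec_pos hy
    have e : y ⬝ᵥ (Pᵀ * Q * P) *ᵥ y = (P *ᵥ y) ⬝ᵥ Q *ᵥ (P *ᵥ y) := elim_sandwich P Q P y y
    simp only [star_trivial, Matrix.neg_mulVec, dotProduct_neg] at hpos
    rw [e] at hpos
    simpa [Matrix.mulVecLin_apply] using (by linarith : (P *ᵥ y) ⬝ᵥ Q *ᵥ (P *ᵥ y) < 0)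
  -- surjectivity of B and C
  have hsurj : ∀ (k : ℕ) (D : Matrix (Fin k) (Fin n) ℝ), D.rank = k →
      LinearMap.range D.mulVecLin = ⊤ := by
    intro k D hD
    apply Submodule.eq_top_of_finrank_eq
    have h3 : Module.finrank ℝ (LinearMap.range D.mulVecLin) = k := hD
    rw [h3, Module.finrank_fin_fun]
  -- make kernels opaque
  obtain ⟨KB, hKBeq⟩ : ∃ KB', KB' = LinearMap.ker B.mulVecLin := ⟨_, rfl⟩
  obtain ⟨KC, hKCeq⟩ : ∃ KC', KC' = LinearMap.ker C.mulVecLin := ⟨_, rfl⟩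
  have hKBmem : ∀ x, x ∈ KB ↔ B *ᵥ x = 0 := by
    intro x; rw [hKBeq]; exact Iff.rfl
  have hKCmem : ∀ x, x ∈ KC ↔ C *ᵥ x = 0 := by
    intro x; rw [hKCeq]; exact Iff.rfl
  have qnegB : ∀ x, x ∈ KB → x ≠ 0 → x ⬝ᵥ Q *ᵥ x < 0 := by
    rw [hKBeq]; exact qneg b B hB Bperp hBker hBperp hB1
  have qnegC : ∀ x, x ∈ KC → x ≠ 0 → x ⬝ᵥ Q *ᵥ x < 0 := by
    rw [hKCeq]; exact qneg c C hC Cperp hCker hCperp hC1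
  -- the subspace S = KB ⊓ KC and its Q-orthogonal complement Z
  obtain ⟨S, hSeq⟩ : ∃ S', S' = KB ⊓ KC := ⟨_, rfl⟩
  have hSKB : S ≤ KB := hSeq ▸ inf_le_left
  have hSKC : S ≤ KC := hSeq ▸ inf_le_right
  have hSmem : ∀ x, x ∈ KB → x ∈ KC → x ∈ S := by
    intro x h1 h2; rw [hSeq]; exact ⟨h1, h2⟩
  have 𝔹apply : ∀ x y, (Matrix.toBilin' Q) x y = x ⬝ᵥ Q *ᵥ y := fun x y =>
    Matrix.toBilin'_apply' Q x y
  have hrefl : (Matrix.toBilin' Q).IsRefl := by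
    intro x y h
    rw [𝔹apply] at h ⊢
    rw [elim_dot_symm Q hQ]; exact h
  obtain ⟨Z, hZeq⟩ : ∃ Z', Z' = (Matrix.toBilin' Q).orthogonal S := ⟨_, rfl⟩
  have hZmem : ∀ x, x ∈ S → ∀ y, y ∈ Z → x ⬝ᵥ Q *ᵥ y = 0 := by
    intro x hx y hy
    rw [hZeq] at hy
    have := hy x hx
    rwa [𝔹apply] at this
  have hSZ0 : ∀ x, x ∈ S → x ∈ Z → x = 0 := by
    intro x hxS hxZ
    by_contra hx0
    have h1 := qnegB x (hSKB hxS) hx0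
    have h2 := hZmem x hxS x hxZ
    linarith
  have hcomplSZ : IsCompl S Z := by
    rw [hZeq]
    apply LinearMap.BilinForm.isCompl_orthogonal_of_restrict_nondegenerate hrefl
    constructor
    all_goals
      rintro ⟨x, hx⟩ h
      have hx0 : x = 0 := by
        by_contra hx0
        have := h ⟨x, hx⟩
        rw [LinearMap.BilinForm.restrict_apply, LinearMap.domRestrict_apply, 𝔹apply] at this
        exact absurd this (ne_of_lt (qnegB x (hSKB hx) hx0))
      exact Subtype.ext hx0
  have hSZtop : S ⊔ Z = ⊤ := hcomplSZ.sup_eq_top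
  -- TB and TC
  obtain ⟨TB, hTBeq⟩ : ∃ TB', TB' = Z ⊓ KB := ⟨_, rfl⟩
  obtain ⟨TC, hTCeq⟩ : ∃ TC', TC' = Z ⊓ KC := ⟨_, rfl⟩
  have hTBZ : TB ≤ Z := hTBeq ▸ inf_le_left
  have hTCZ : TC ≤ Z := hTCeq ▸ inf_le_left
  have hTBKB : TB ≤ KB := hTBeq ▸ inf_le_right
  have hTCKC : TC ≤ KC := hTCeq ▸ inf_le_right
  have hTBmem : ∀ x, x ∈ Z → x ∈ KB → x ∈ TB := by
    intro x h1 h2; rw [hTBeq]; exact ⟨h1, h2⟩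
  have hTCmem : ∀ x, x ∈ Z → x ∈ KC → x ∈ TC := by
    intro x h1 h2; rw [hTCeq]; exact ⟨h1, h2⟩
  have hKBsup : S ⊔ TB = KB := by
    rw [hTBeq, ← sup_inf_assoc_of_le _ hSKB, hSZtop, top_inf_eq]
  have hKCsup : S ⊔ TC = KC := by
    rw [hTCeq, ← sup_inf_assoc_of_le _ hSKC, hSZtop, top_inf_eq]
  -- the complement U of TB ⊔ TC inside Z
  obtain ⟨U', hU'⟩ := Submodule.exists_isCompl (Submodule.comap Z.subtype (TB ⊔ TC))
  obtain ⟨U, hUeq⟩ : ∃ U'', U'' = Submodule.map Z.subtype U' := ⟨_, rfl⟩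
  have hTZ : TB ⊔ TC ≤ Z := sup_le hTBZ hTCZ
  have hUZ : U ≤ Z := hUeq ▸ Submodule.map_subtype_le _ _
  have hmapT : Submodule.map Z.subtype (Submodule.comap Z.subtype (TB ⊔ TC)) = TB ⊔ TC := by
    rw [Submodule.map_comap_subtype, inf_eq_right.mpr hTZ]
  have hTU_inf : (TB ⊔ TC) ⊓ U = ⊥ := by
    rw [hUeq, ← hmapT, ← Submodule.map_inf _ (Submodule.injective_subtype Z),
      hU'.inf_eq_bot, Submodule.map_bot]
  have hTUZ : (TB ⊔ TC) ⊔ U = Z := by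
    rw [hUeq, ← hmapT, ← Submodule.map_sup, hU'.sup_eq_top, Submodule.map_subtype_top]
  have hTop : S ⊔ ((TB ⊔ TC) ⊔ U) = ⊤ := by rw [hTUZ]; exact hSZtop
  have hKK : KB ⊔ KC = S ⊔ (TB ⊔ TC) := by
    rw [← hKBsup, ← hKCsup, sup_sup_sup_comm, sup_idem]
  have hle_top : ∀ W : Submodule ℝ (Fin n → ℝ), S ≤ W → TB ≤ W → TC ≤ W → U ≤ W → ⊤ ≤ W := by
    intro W h1 h2 h3 h4
    rw [← hTop]
    exact sup_le h1 (sup_le (sup_le h2 h3) h4)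
  -- main elementwise disjointness facts
  have hd1 : ∀ x, x ∈ KB ⊔ KC → x ∈ U → x = 0 := by
    intro x hx hxU
    rw [hKK] at hx
    obtain ⟨s, hs, t, ht, rfl⟩ := Submodule.mem_sup.mp hx
    have hsZ : s ∈ Z := by
      have h1 : s = (s + t) - t := by abel
      rw [h1]
      exact Z.sub_mem (hUZ hxU) (hTZ ht)
    have hs0 : s = 0 := hSZ0 s hs hsZ
    have htU : t ∈ (TB ⊔ TC) ⊓ U := ⟨ht, by simpa [hs0] using hxU⟩
    rw [hTU_inf] at htU
    simp only [Submodule.mem_bot] at htU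
    rw [hs0, htU, add_zero]
  -- IsCompl for U against KB ⊔ KC
  have hcomplU : IsCompl U (KB ⊔ KC) := by
    constructor
    · rw [disjoint_iff, eq_bot_iff]
      rintro x ⟨hxU, hxK⟩
      exact hd1 x hxK hxU
    · rw [codisjoint_iff, ← top_le_iff]
      exact hle_top _ ((hSKB.trans le_sup_left).trans le_sup_right)
        ((hTBKB.trans le_sup_left).trans le_sup_right)
        ((hTCKC.trans le_sup_right).trans le_sup_right) le_sup_left
  -- IsCompl for TC against KB ⊔ U
  have hcomplTC : IsCompl TC (KB ⊔ U) := by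
    constructor
    · rw [disjoint_iff, eq_bot_iff]
      rintro x ⟨hxTC, hxK⟩
      obtain ⟨k, hk, u, hu, rfl⟩ := Submodule.mem_sup.mp hxK
      have huKK : u ∈ KB ⊔ KC := by
        have h1 : u = (k + u) - k := by abel
        rw [h1]
        exact Submodule.sub_mem _ (Submodule.mem_sup_right (hTCKC hxTC)) (Submodule.mem_sup_left hk)
      have hu0 : u = 0 := hd1 u huKK hu
      have hkS : k ∈ S := by
        have : k + u = k := by rw [hu0, add_zero]
        rw [this] at hxTC
        exact hSmem k hk ((hKCmem k).mpr ((hKCmem _).mp (hTCKC hxTC)))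
      have : k + u = k := by rw [hu0, add_zero]
      rw [this] at hxTC ⊢
      exact hSZ0 k hkS (hTCZ hxTC)
    · rw [codisjoint_iff, ← top_le_iff]
      exact hle_top _ (hSKB.trans (le_sup_left.trans le_sup_right))
        (hTBKB.trans (le_sup_left.trans le_sup_right)) le_sup_left
        (le_sup_right.trans le_sup_right)
  -- IsCompl for TB against S ⊔ (TC ⊔ U)
  have hcomplTB : IsCompl TB (S ⊔ (TC ⊔ U)) := by
    constructor
    · rw [disjoint_iff, eq_bot_iff]
      rintro x ⟨hxTB, hxK⟩
      obtain ⟨s, hs, y, hy, rfl⟩ := Submodule.mem_sup.mp hxK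
      have hyZ : y ∈ Z := (sup_le hTCZ hUZ : TC ⊔ U ≤ Z) hy
      have hsZ : s ∈ Z := by
        have h1 : s = (s + y) - y := by abel
        rw [h1]
        exact Z.sub_mem (hTBZ hxTB) hyZ
      have hs0 : s = 0 := hSZ0 s hs hsZ
      rw [hs0, zero_add] at hxTB ⊢
      obtain ⟨t, ht, u, hu, rfl⟩ := Submodule.mem_sup.mp hy
      have huKK : u ∈ KB ⊔ KC := by
        have h1 : u = (t + u) - t := by abel
        rw [h1]
        exact Submodule.sub_mem _ (Submodule.mem_sup_left (hTBKB hxTB))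
          (Submodule.mem_sup_right (hTCKC ht))
      have hu0 : u = 0 := hd1 u huKK hu
      rw [hu0, add_zero] at hxTB ⊢
      exact hSZ0 t (hSmem t ((hKBmem t).mpr ((hKBmem t).mp (hTBKB hxTB))) (hTCKC ht)) (hTBZ hxTB)
    · rw [codisjoint_iff, ← top_le_iff]
      exact hle_top _ (le_sup_left.trans le_sup_right) le_sup_left
        ((le_sup_left.trans le_sup_right).trans le_sup_right)
        ((le_sup_right.trans le_sup_right).trans le_sup_right)
  -- IsCompl for S against TB ⊔ (TC ⊔ U)
  have hcomplS : IsCompl S (TB ⊔ (TC ⊔ U)) := by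
    constructor
    · rw [disjoint_iff, eq_bot_iff]
      rintro x ⟨hxS, hxK⟩
      exact hSZ0 x hxS ((sup_le hTBZ (sup_le hTCZ hUZ) : TB ⊔ (TC ⊔ U) ≤ Z) hxK)
    · rw [codisjoint_iff, ← top_le_iff]
      exact hle_top _ le_sup_left (le_sup_left.trans le_sup_right)
        ((le_sup_left.trans le_sup_right).trans le_sup_right)
        ((le_sup_right.trans le_sup_right).trans le_sup_right)
  -- IsCompl of KB against WB := TC ⊔ U, and KC against WC := TB ⊔ U
  have hcomplWB : IsCompl KB (TC ⊔ U) := by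
    constructor
    · rw [disjoint_iff, eq_bot_iff]
      rintro x ⟨hxKB, hxW⟩
      obtain ⟨t, ht, u, hu, rfl⟩ := Submodule.mem_sup.mp hxW
      have huKK : u ∈ KB ⊔ KC := by
        have h1 : u = (t + u) - t := by abel
        rw [h1]
        exact Submodule.sub_mem _ (Submodule.mem_sup_left hxKB)
          (Submodule.mem_sup_right (hTCKC ht))
      have hu0 : u = 0 := hd1 u huKK hu
      rw [hu0, add_zero] at hxKB ⊢
      exact hSZ0 t (hSmem t hxKB (hTCKC ht)) (hTCZ ht)
    · rw [codisjoint_iff, ← top_le_iff]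
      exact hle_top _ (hSKB.trans le_sup_left) (hTBKB.trans le_sup_left)
        (le_sup_left.trans le_sup_right) (le_sup_right.trans le_sup_right)
  have hcomplWC : IsCompl KC (TB ⊔ U) := by
    constructor
    · rw [disjoint_iff, eq_bot_iff]
      rintro x ⟨hxKC, hxW⟩
      obtain ⟨t, ht, u, hu, rfl⟩ := Submodule.mem_sup.mp hxW
      have huKK : u ∈ KB ⊔ KC := by
        have h1 : u = (t + u) - t := by abel
        rw [h1]
        exact Submodule.sub_mem _ (Submodule.mem_sup_right hxKC)
          (Submodule.mem_sup_left (hTBKB ht))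
      have hu0 : u = 0 := hd1 u huKK hu
      rw [hu0, add_zero] at hxKC ⊢
      exact hSZ0 t (hSmem t (hTBKB ht) hxKC) (hTBZ ht)
    · rw [codisjoint_iff, ← top_le_iff]
      exact hle_top _ (hSKC.trans le_sup_left) (le_sup_left.trans le_sup_right)
        (hTCKC.trans le_sup_left) (le_sup_right.trans le_sup_right)
  -- the four projections
  set πS := projEndo S (TB ⊔ (TC ⊔ U)) hcomplS with hπS
  set πTB := projEndo TB (S ⊔ (TC ⊔ U)) hcomplTB with hπTB
  set πTC := projEndo TC (KB ⊔ U) hcomplTC with hπTC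
  set πU := projEndo U (KB ⊔ KC) hcomplU with hπU
  have πS_mem : ∀ x, πS x ∈ S := fun x => projEndo_mem _ _ _ x
  have πTB_mem : ∀ x, πTB x ∈ TB := fun x => projEndo_mem _ _ _ x
  have πTC_mem : ∀ x, πTC x ∈ TC := fun x => projEndo_mem _ _ _ x
  have πU_mem : ∀ x, πU x ∈ U := fun x => projEndo_mem _ _ _ x
  -- vanishing of projections on kernels
  have πTB_KC : ∀ x, x ∈ KC → πTB x = 0 := by
    intro x hx
    apply projEndo_right
    rw [← hKCsup] at hx
    exact (sup_le le_sup_left (le_sup_left.trans le_sup_right) : S ⊔ TC ≤ S ⊔ (TC ⊔ U)) hx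
  have πTC_KB : ∀ x, x ∈ KB → πTC x = 0 := fun x hx =>
    projEndo_right _ _ _ x (Submodule.mem_sup_left hx)
  have πU_KB : ∀ x, x ∈ KB → πU x = 0 := fun x hx =>
    projEndo_right _ _ _ x (Submodule.mem_sup_left hx)
  have πU_KC : ∀ x, x ∈ KC → πU x = 0 := fun x hx =>
    projEndo_right _ _ _ x (Submodule.mem_sup_right hx)
  -- the decomposition x = πS x + πTB x + πTC x + πU x
  have hdecomp : ∀ x, πS x + πTB x + πTC x + πU x = x := by
    have hker : ⊤ ≤ LinearMap.ker ((πS + πTB + πTC + πU) - LinearMap.id) := by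
      rw [← hTop]
      have hS' : S ≤ LinearMap.ker ((πS + πTB + πTC + πU) - LinearMap.id) := by
        intro x hx
        rw [LinearMap.mem_ker, LinearMap.sub_apply, LinearMap.add_apply, LinearMap.add_apply,
          LinearMap.add_apply, LinearMap.id_apply]
        rw [projEndo_left _ _ _ x hx, projEndo_right _ _ _ x (Submodule.mem_sup_left hx),
          πTC_KB x (hSKB hx), πU_KB x (hSKB hx)]
        abel
      have hTB' : TB ≤ LinearMap.ker ((πS + πTB + πTC + πU) - LinearMap.id) := by
        intro x hx
        rw [LinearMap.mem_ker, LinearMap.sub_apply, LinearMap.add_apply, LinearMap.add_apply,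
          LinearMap.add_apply, LinearMap.id_apply]
        rw [projEndo_right _ _ _ x (Submodule.mem_sup_left hx), projEndo_left _ _ _ x hx,
          πTC_KB x (hTBKB hx), πU_KB x (hTBKB hx)]
        abel
      have hTC' : TC ≤ LinearMap.ker ((πS + πTB + πTC + πU) - LinearMap.id) := by
        intro x hx
        rw [LinearMap.mem_ker, LinearMap.sub_apply, LinearMap.add_apply, LinearMap.add_apply,
          LinearMap.add_apply, LinearMap.id_apply]
        rw [projEndo_right _ _ _ x (Submodule.mem_sup_right (Submodule.mem_sup_left hx)),
          projEndo_right _ _ _ x (Submodule.mem_sup_right (Submodule.mem_sup_left hx)),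
          projEndo_left _ _ _ x hx, πU_KC x (hTCKC hx)]
        abel
      have hU' : U ≤ LinearMap.ker ((πS + πTB + πTC + πU) - LinearMap.id) := by
        intro x hx
        rw [LinearMap.mem_ker, LinearMap.sub_apply, LinearMap.add_apply, LinearMap.add_apply,
          LinearMap.add_apply, LinearMap.id_apply]
        rw [projEndo_right _ _ _ x (Submodule.mem_sup_right (Submodule.mem_sup_right hx)),
          projEndo_right _ _ _ x (Submodule.mem_sup_right (Submodule.mem_sup_right hx)),
          projEndo_right _ _ _ x (Submodule.mem_sup_right hx), projEndo_left _ _ _ x hx]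
        abel
      exact sup_le hS' (sup_le (sup_le hTB' hTC') hU')
    intro x
    have := hker (Submodule.mem_top (x := x))
    rw [LinearMap.mem_ker, LinearMap.sub_apply, LinearMap.add_apply, LinearMap.add_apply,
      LinearMap.add_apply, LinearMap.id_apply, sub_eq_zero] at this
    exact this
  -- the isomorphism β : TC ⊔ U ≃ ℝ^b induced by B, and γ : TB ⊔ U ≃ ℝ^c by C
  have hBtop : LinearMap.range B.mulVecLin = ⊤ := hsurj b B hB
  have hCtop : LinearMap.range C.mulVecLin = ⊤ := hsurj c C hC
  set βL : ↥(TC ⊔ U) →ₗ[ℝ] (Fin b → ℝ) := B.mulVecLin ∘ₗ (TC ⊔ U).subtype with hβL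
  have hβLapply : ∀ w : ↥(TC ⊔ U), βL w = B *ᵥ (w : Fin n → ℝ) := fun w => rfl
  have hβinj : Function.Injective βL := by
    rw [← LinearMap.ker_eq_bot, eq_bot_iff]
    rintro w hw
    rw [LinearMap.mem_ker] at hw
    have h0 : (w : Fin n → ℝ) ∈ KB := (hKBmem _).mpr (by rw [← hβLapply w]; exact hw)
    have : (w : Fin n → ℝ) ∈ KB ⊓ (TC ⊔ U) := ⟨h0, w.2⟩
    rw [hcomplWB.inf_eq_bot] at this
    rw [Submodule.mem_bot]
    exact Subtype.ext (by simpa using this)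
  have hβsurj : Function.Surjective βL := by
    intro v
    obtain ⟨x, hx⟩ := LinearMap.range_eq_top.mp hBtop v
    have hxmem : x ∈ KB ⊔ (TC ⊔ U) := by rw [hcomplWB.sup_eq_top]; trivial
    obtain ⟨k, hk, w, hw, rfl⟩ := Submodule.mem_sup.mp hxmem
    refine ⟨⟨w, hw⟩, ?_⟩
    rw [hβLapply]
    have hk0 : B *ᵥ k = 0 := (hKBmem k).mp hk
    rw [Matrix.mulVecLin_apply, Matrix.mulVec_add, hk0, zero_add] at hx
    exact hx
  set β := LinearEquiv.ofBijective βL ⟨hβinj, hβsurj⟩ with hβdef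
  set γL : ↥(TB ⊔ U) →ₗ[ℝ] (Fin c → ℝ) := C.mulVecLin ∘ₗ (TB ⊔ U).subtype with hγL
  have hγLapply : ∀ w : ↥(TB ⊔ U), γL w = C *ᵥ (w : Fin n → ℝ) := fun w => rfl
  have hγinj : Function.Injective γL := by
    rw [← LinearMap.ker_eq_bot, eq_bot_iff]
    rintro w hw
    rw [LinearMap.mem_ker] at hw
    have h0 : (w : Fin n → ℝ) ∈ KC := (hKCmem _).mpr (by rw [← hγLapply w]; exact hw)
    have : (w : Fin n → ℝ) ∈ KC ⊓ (TB ⊔ U) := ⟨h0, w.2⟩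
    rw [hcomplWC.inf_eq_bot] at this
    rw [Submodule.mem_bot]
    exact Subtype.ext (by simpa using this)
  have hγsurj : Function.Surjective γL := by
    intro v
    obtain ⟨x, hx⟩ := LinearMap.range_eq_top.mp hCtop v
    have hxmem : x ∈ KC ⊔ (TB ⊔ U) := by rw [hcomplWC.sup_eq_top]; trivial
    obtain ⟨k, hk, w, hw, rfl⟩ := Submodule.mem_sup.mp hxmem
    refine ⟨⟨w, hw⟩, ?_⟩
    rw [hγLapply]
    have hk0 : C *ᵥ k = 0 := (hKCmem k).mp hk
    rw [Matrix.mulVecLin_apply, Matrix.mulVec_add, hk0, zero_add] at hx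
    exact hx
  set γ := LinearEquiv.ofBijective γL ⟨hγinj, hγsurj⟩ with hγdef
  -- the correction maps
  set RC : (Fin b → ℝ) →ₗ[ℝ] (Fin n → ℝ) :=
    πTC ∘ₗ ((TC ⊔ U).subtype ∘ₗ (β.symm : (Fin b → ℝ) →ₗ[ℝ] ↥(TC ⊔ U))) with hRCdef
  set RU : (Fin b → ℝ) →ₗ[ℝ] (Fin n → ℝ) :=
    πU ∘ₗ ((TC ⊔ U).subtype ∘ₗ (β.symm : (Fin b → ℝ) →ₗ[ℝ] ↥(TC ⊔ U))) with hRUdef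
  set SB : (Fin c → ℝ) →ₗ[ℝ] (Fin n → ℝ) :=
    πTB ∘ₗ ((TB ⊔ U).subtype ∘ₗ (γ.symm : (Fin c → ℝ) →ₗ[ℝ] ↥(TB ⊔ U))) with hSBdef
  set SU : (Fin c → ℝ) →ₗ[ℝ] (Fin n → ℝ) :=
    πU ∘ₗ ((TB ⊔ U).subtype ∘ₗ (γ.symm : (Fin c → ℝ) →ₗ[ℝ] ↥(TB ⊔ U))) with hSUdef
  -- the key recovery identities
  have hβsymm : ∀ x : Fin n → ℝ, ∃ k, k ∈ KB ∧
      ((β.symm (B *ᵥ x) : ↥(TC ⊔ U)) : Fin n → ℝ) + k = x := by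
    intro x
    have hsum : ((KB.projectionOnto (TC ⊔ U) hcomplWB x : _) : Fin n → ℝ) + (((TC ⊔ U).projectionOnto KB hcomplWB.symm x : _) : Fin n → ℝ) = x :=
      Submodule.projection_add_projection_eq_self hcomplWB x
    set k := KB.projectionOnto (TC ⊔ U) hcomplWB x
    set w := (TC ⊔ U).projectionOnto KB hcomplWB.symm x
    have hBw : βL w = B *ᵥ x := by
      rw [hβLapply]
      have hk0 : B *ᵥ (k : Fin n → ℝ) = 0 := (hKBmem _).mp k.2
      have : B *ᵥ ((k : Fin n → ℝ) + (w : Fin n → ℝ)) = B *ᵥ x := by rw [hsum]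
      rw [Matrix.mulVec_add, hk0, zero_add] at this
      exact this
    have hw : β.symm (B *ᵥ x) = w := by
      rw [← hBw]
      have : βL w = β w := rfl
      rw [this, LinearEquiv.symm_apply_apply]
    refine ⟨(k : Fin n → ℝ), k.2, ?_⟩
    rw [hw]
    rw [add_comm]
    exact hsum
  have hγsymm : ∀ x : Fin n → ℝ, ∃ k, k ∈ KC ∧
      ((γ.symm (C *ᵥ x) : ↥(TB ⊔ U)) : Fin n → ℝ) + k = x := by
    intro x
    have hsum : ((KC.projectionOnto (TB ⊔ U) hcomplWC x : _) : Fin n → ℝ) + (((TB ⊔ U).projectionOnto KC hcomplWC.symm x : _) : Fin n → ℝ) = x :=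
      Submodule.projection_add_projection_eq_self hcomplWC x
    set k := KC.projectionOnto (TB ⊔ U) hcomplWC x
    set w := (TB ⊔ U).projectionOnto KC hcomplWC.symm x
    have hCw : γL w = C *ᵥ x := by
      rw [hγLapply]
      have hk0 : C *ᵥ (k : Fin n → ℝ) = 0 := (hKCmem _).mp k.2
      have : C *ᵥ ((k : Fin n → ℝ) + (w : Fin n → ℝ)) = C *ᵥ x := by rw [hsum]
      rw [Matrix.mulVec_add, hk0, zero_add] at this
      exact this
    have hw : γ.symm (C *ᵥ x) = w := by
      rw [← hCw]
      have : γL w = γ w := rfl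
      rw [this, LinearEquiv.symm_apply_apply]
    refine ⟨(k : Fin n → ℝ), k.2, ?_⟩
    rw [hw]
    rw [add_comm]
    exact hsum
  have hRC : ∀ x, RC (B *ᵥ x) = πTC x := by
    intro x
    obtain ⟨k, hk, hx⟩ := hβsymm x
    have : RC (B *ᵥ x) = πTC ((β.symm (B *ᵥ x) : ↥(TC ⊔ U)) : Fin n → ℝ) := rfl
    rw [this]
    conv_rhs => rw [← hx]
    rw [map_add, πTC_KB k hk, add_zero]
  have hRU : ∀ x, RU (B *ᵥ x) = πU x := by
    intro x
    obtain ⟨k, hk, hx⟩ := hβsymm x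
    have : RU (B *ᵥ x) = πU ((β.symm (B *ᵥ x) : ↥(TC ⊔ U)) : Fin n → ℝ) := rfl
    rw [this]
    conv_rhs => rw [← hx]
    rw [map_add, πU_KB k hk, add_zero]
  have hSB : ∀ x, SB (C *ᵥ x) = πTB x := by
    intro x
    obtain ⟨k, hk, hx⟩ := hγsymm x
    have : SB (C *ᵥ x) = πTB ((γ.symm (C *ᵥ x) : ↥(TB ⊔ U)) : Fin n → ℝ) := rfl
    rw [this]
    conv_rhs => rw [← hx]
    rw [map_add, πTB_KC k hk, add_zero]
  have hSU : ∀ x, SU (C *ᵥ x) = πU x := by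
    intro x
    obtain ⟨k, hk, hx⟩ := hγsymm x
    have : SU (C *ᵥ x) = πU ((γ.symm (C *ᵥ x) : ↥(TB ⊔ U)) : Fin n → ℝ) := rfl
    rw [this]
    conv_rhs => rw [← hx]
    rw [map_add, πU_KC k hk, add_zero]
  -- matrix versions of the correction maps
  have hRCm : ∀ v, (LinearMap.toMatrix' RC) *ᵥ v = RC v := fun v => by
    rw [← Matrix.toLin'_apply, Matrix.toLin'_toMatrix']
  have hRUm : ∀ v, (LinearMap.toMatrix' RU) *ᵥ v = RU v := fun v => by
    rw [← Matrix.toLin'_apply, Matrix.toLin'_toMatrix']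
  have hSBm : ∀ v, (LinearMap.toMatrix' SB) *ᵥ v = SB v := fun v => by
    rw [← Matrix.toLin'_apply, Matrix.toLin'_toMatrix']
  have hSUm : ∀ v, (LinearMap.toMatrix' SU) *ᵥ v = SU v := fun v => by
    rw [← Matrix.toLin'_apply, Matrix.toLin'_toMatrix']
  set RCm := LinearMap.toMatrix' RC
  set RUm := LinearMap.toMatrix' RU
  set SBm := LinearMap.toMatrix' SB
  set SUm := LinearMap.toMatrix' SU
  set K := ∑ i, ∑ j, |Q i j| with hK
  have hKnn : (0:ℝ) ≤ K :=
    Finset.sum_nonneg fun i _ => Finset.sum_nonneg fun j _ => abs_nonneg _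
  set V0 : Matrix (Fin b) (Fin c) ℝ :=
    -((RCm + RUm)ᵀ * Q * (SBm + SUm)) - (K + 1) • (RUmᵀ * SUm) with hV0
  have hsym : (-(Q + Bᵀ * V0 * C + Cᵀ * V0ᵀ * B)).IsSymm := by
    unfold Matrix.IsSymm
    have h1 : (Bᵀ * V0 * C)ᵀ = Cᵀ * V0ᵀ * B := by
      rw [Matrix.transpose_mul, Matrix.transpose_mul, Matrix.transpose_transpose,
        Matrix.mul_assoc]
    have h2 : (Cᵀ * V0ᵀ * B)ᵀ = Bᵀ * V0 * C := by
      rw [Matrix.transpose_mul, Matrix.transpose_mul, Matrix.transpose_transpose,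
        Matrix.transpose_transpose, Matrix.mul_assoc]
    rw [Matrix.transpose_neg, Matrix.transpose_add, Matrix.transpose_add, h1, h2, hQ.eq,
      add_right_comm]
  refine ⟨V0, Matrix.PosDef.of_dotProduct_mulVec_pos hsym ?_⟩
  intro x hx
  have hBx1 : (RCm + RUm) *ᵥ (B *ᵥ x) = πTC x + πU x := by
    rw [Matrix.add_mulVec, hRCm, hRUm, hRC, hRU]
  have hCx1 : (SBm + SUm) *ᵥ (C *ᵥ x) = πTB x + πU x := by
    rw [Matrix.add_mulVec, hSBm, hSUm, hSB, hSU]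
  have hBx2 : RUm *ᵥ (B *ᵥ x) = πU x := by rw [hRUm, hRU]
  have hCx2 : SUm *ᵥ (C *ᵥ x) = πU x := by rw [hSUm, hSU]
  have cross : (B *ᵥ x) ⬝ᵥ V0 *ᵥ (C *ᵥ x)
      = -((πTC x + πU x) ⬝ᵥ Q *ᵥ (πTB x + πU x)) - (K + 1) * (πU x ⬝ᵥ πU x) := by
    rw [hV0, Matrix.sub_mulVec, dotProduct_sub, Matrix.neg_mulVec, dotProduct_neg,
      elim_sandwich, hBx1, hCx1, Matrix.smul_mulVec, dotProduct_smul,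
      elim_sandwich2, hBx2, hCx2, smul_eq_mul]
  have hx1 : x ⬝ᵥ (Q + Bᵀ * V0 * C + Cᵀ * V0ᵀ * B) *ᵥ x
      = x ⬝ᵥ Q *ᵥ x + (B *ᵥ x) ⬝ᵥ V0 *ᵥ (C *ᵥ x) + (C *ᵥ x) ⬝ᵥ V0ᵀ *ᵥ (B *ᵥ x) := by
    rw [Matrix.add_mulVec, Matrix.add_mulVec, dotProduct_add, dotProduct_add,
      elim_sandwich B V0 C x x, elim_sandwich C V0ᵀ B x x]
  have hx2 : (C *ᵥ x) ⬝ᵥ V0ᵀ *ᵥ (B *ᵥ x) = (B *ᵥ x) ⬝ᵥ V0 *ᵥ (C *ᵥ x) :=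
    elim_dot_transpose V0 (B *ᵥ x) (C *ᵥ x)
  have hsp : πS x ⬝ᵥ Q *ᵥ πTB x = 0 := hZmem _ (πS_mem x) _ (hTBZ (πTB_mem x))
  have hst : πS x ⬝ᵥ Q *ᵥ πTC x = 0 := hZmem _ (πS_mem x) _ (hTCZ (πTC_mem x))
  have hsu : πS x ⬝ᵥ Q *ᵥ πU x = 0 := hZmem _ (πS_mem x) _ (hUZ (πU_mem x))
  have hexp := elim_expand Q hQ (πS x) (πTB x) (πTC x) (πU x) hsp hst hsu
  rw [hdecomp x] at hexp
  have hbnd := elim_bound Q (πU x)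
  rw [← hK] at hbnd
  have hqs : πS x ⬝ᵥ Q *ᵥ πS x ≤ 0 := by
    rcases eq_or_ne (πS x) 0 with h | h
    · rw [h]; simp
    · exact le_of_lt (qnegB _ (hSKB (πS_mem x)) h)
  have hqp : πTB x ⬝ᵥ Q *ᵥ πTB x ≤ 0 := by
    rcases eq_or_ne (πTB x) 0 with h | h
    · rw [h]; simp
    · exact le_of_lt (qnegB _ (hTBKB (πTB_mem x)) h)
  have hqt : πTC x ⬝ᵥ Q *ᵥ πTC x ≤ 0 := by
    rcases eq_or_ne (πTC x) 0 with h | h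
    · rw [h]; simp
    · exact le_of_lt (qnegC _ (hTCKC (πTC_mem x)) h)
  have hne : πS x ≠ 0 ∨ πTB x ≠ 0 ∨ πTC x ≠ 0 ∨ πU x ≠ 0 := by
    by_contra h
    push_neg at h
    obtain ⟨h1, h2, h3, h4⟩ := h
    apply hx
    rw [← hdecomp x, h1, h2, h3, h4]
    simp
  have huu := elim_self_nonneg (πU x)
  have hKuu : 0 ≤ K * (πU x ⬝ᵥ πU x) := mul_nonneg hKnn huu
  simp only [star_trivial, Matrix.neg_mulVec, dotProduct_neg]
  rw [hx1, hx2, cross]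
  rcases eq_or_ne (πU x) 0 with hu0 | hu0
  · have h0 : πU x ⬝ᵥ πU x = 0 := by rw [hu0]; simp
    have h0' : πU x ⬝ᵥ Q *ᵥ πU x = 0 := by rw [hu0]; simp
    have h0'' : K * (πU x ⬝ᵥ πU x) = 0 := by rw [h0, mul_zero]
    rcases hne with h | h | h | h
    · have := qnegB _ (hSKB (πS_mem x)) h
      linarith
    · have := qnegB _ (hTBKB (πTB_mem x)) h
      linarith
    · have := qnegC _ (hTCKC (πTC_mem x)) h
      linarith
    · exact absurd hu0 h
  · have hupos := elim_self_pos _ hu0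
    linarith

private lemma elim_reverse {n k b c : ℕ} (Q : Matrix (Fin n) (Fin n) ℝ) (hQ : Q.IsSymm)
    (B : Matrix (Fin b) (Fin n) ℝ) (C : Matrix (Fin c) (Fin n) ℝ) (V : Matrix (Fin b) (Fin c) ℝ)
    (P : Matrix (Fin n) (Fin k) ℝ) (hker : B * P = 0) (hrank : P.rank = k)
    (hpos : (-(Q + Bᵀ * V * C + Cᵀ * Vᵀ * B)).PosDef) : (-(Pᵀ * Q * P)).PosDef := by
  refine Matrix.PosDef.of_dotProduct_mulVec_pos ?_ ?_
  · have hsym : (-(Pᵀ * Q * P)).IsSymm := by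
      unfold Matrix.IsSymm
      rw [Matrix.transpose_neg, Matrix.transpose_mul, Matrix.transpose_mul,
        Matrix.transpose_transpose, hQ.eq, Matrix.mul_assoc]
    exact hsym
  · intro y hy
    have hinj : LinearMap.ker P.mulVecLin = ⊥ := by
      have h1 := LinearMap.finrank_range_add_finrank_ker P.mulVecLin
      rw [Module.finrank_fin_fun] at h1
      have h2 : Module.finrank ℝ (LinearMap.range P.mulVecLin) = k := hrank
      apply Submodule.finrank_eq_zero.mp
      omega
    have hz : P *ᵥ y ≠ 0 := by
      intro h
      apply hy
      have : y ∈ LinearMap.ker P.mulVecLin := h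
      rw [hinj] at this
      simpa using this
    have hBz : B *ᵥ (P *ᵥ y) = 0 := by
      rw [Matrix.mulVec_mulVec, hker, Matrix.zero_mulVec]
    have key := hpos.dotProduct_mulVec_pos hz
    have e1 : (P *ᵥ y) ⬝ᵥ (Q + Bᵀ * V * C + Cᵀ * Vᵀ * B) *ᵥ (P *ᵥ y)
        = (P *ᵥ y) ⬝ᵥ Q *ᵥ (P *ᵥ y) := by
      set z := P *ᵥ y
      rw [Matrix.add_mulVec, Matrix.add_mulVec, dotProduct_add, dotProduct_add]
      rw [elim_sandwich B V C z z, elim_sandwich C Vᵀ B z z, hBz]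
      simp
    have e2 : y ⬝ᵥ (Pᵀ * Q * P) *ᵥ y = (P *ᵥ y) ⬝ᵥ Q *ᵥ (P *ᵥ y) := elim_sandwich P Q P y y
    simp only [star_trivial, Matrix.neg_mulVec, dotProduct_neg] at key ⊢
    rw [e2, ← e1]
    exact key

/-- Elimination (projection) lemma, two-constraint form. -/
theorem elimination_lemma {n b c : ℕ}
    (Q : Matrix (Fin n) (Fin n) ℝ) (hQ : Q.IsSymm)
    (B : Matrix (Fin b) (Fin n) ℝ) (hB : B.rank = b)
    (C : Matrix (Fin c) (Fin n) ℝ) (hC : C.rank = c)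
    (Bperp : Matrix (Fin n) (Fin (n - b)) ℝ)
    (hBker : B * Bperp = 0) (hBperp : Bperp.rank = n - b)
    (Cperp : Matrix (Fin n) (Fin (n - c)) ℝ)
    (hCker : C * Cperp = 0) (hCperp : Cperp.rank = n - c) :
    ((-(Bperpᵀ * Q * Bperp)).PosDef ∧ (-(Cperpᵀ * Q * Cperp)).PosDef) ↔
      ∃ V : Matrix (Fin b) (Fin c) ℝ, (-(Q + Bᵀ * V * C + Cᵀ * Vᵀ * B)).PosDef := by
  constructor
  · rintro ⟨h1, h2⟩
    exact elim_forward Q hQ B hB C hC Bperp hBker hBperp Cperp hCker hCperp h1 h2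
  · rintro ⟨V, hV⟩
    refine ⟨elim_reverse Q hQ B C V Bperp hBker hBperp hV, ?_⟩
    have hV' : (-(Q + Cᵀ * Vᵀ * B + Bᵀ * (Vᵀ)ᵀ * C)).PosDef := by
      rw [Matrix.transpose_transpose, add_right_comm]
      exact hV
    exact elim_reverse Q hQ C B Vᵀ Cperp hCker hCperp hV'
end

section
/- Let N ≥ 1, A ∈ ℝ^{n×n}, B ∈ ℝ^{n×m}, C ∈ ℝ^{p×n}, and let F ∈ ℝ^{Nm×Np} be block lower triangular with m×p blocks. Define the matrix 𝒞(F) := [[F(I_N ⊗ C), −I_{Nm}], [ℒ_{N−1} ⊗ A − ℛ_{N−1} ⊗ I_n, ℒ_{N−1} ⊗ B]], where ℒ_{N−1} = [I_{N−1}, 0] and ℛ_{N−1} = [0, I_{N−1}] are (N−1)×N block selection matrices. Then 𝒞(F) has full row rank equal to (N−1)n + Nm. -/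
open Matrix Kronecker

/-- The constraint matrix `𝒞(F)` built from a block lower triangular periodic
output-feedback gain has full row rank `(N−1)n + Nm`. -/
theorem constraint_matrix_full_row_rank {N n m p : ℕ} (hN : 1 ≤ N)
    (A : Matrix (Fin n) (Fin n) ℝ) (B : Matrix (Fin n) (Fin m) ℝ)
    (C : Matrix (Fin p) (Fin n) ℝ)
    (F : Matrix (Fin N × Fin m) (Fin N × Fin p) ℝ)
    (hF : ∀ (a b : Fin N) (i : Fin m) (j : Fin p), (a : ℕ) < (b : ℕ) → F (a, i) (b, j) = 0)
    (L R : Matrix (Fin (N - 1)) (Fin N) ℝ)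
    (hL : ∀ (i : Fin (N - 1)) (j : Fin N), L i j = if (j : ℕ) = (i : ℕ) then 1 else 0)
    (hR : ∀ (i : Fin (N - 1)) (j : Fin N), R i j = if (j : ℕ) = (i : ℕ) + 1 then 1 else 0) :
    (Matrix.fromBlocks
        (F * ((1 : Matrix (Fin N) (Fin N) ℝ) ⊗ₖ C))
        (-(1 : Matrix (Fin N × Fin m) (Fin N × Fin m) ℝ))
        (L ⊗ₖ A - R ⊗ₖ (1 : Matrix (Fin n) (Fin n) ℝ))
        (L ⊗ₖ B)).rank = (N - 1) * n + N * m := by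
  classical
  set P : Matrix (Fin N × Fin m) (Fin N × Fin n) ℝ :=
    F * ((1 : Matrix (Fin N) (Fin N) ℝ) ⊗ₖ C) with hPdef
  set Q : Matrix (Fin (N - 1) × Fin n) (Fin N × Fin n) ℝ :=
    L ⊗ₖ A - R ⊗ₖ (1 : Matrix (Fin n) (Fin n) ℝ) with hQdef
  set S : Matrix (Fin (N - 1) × Fin n) (Fin N × Fin m) ℝ := L ⊗ₖ B with hSdef
  set M' : Matrix (Fin (N - 1) × Fin n) (Fin N × Fin n) ℝ := Q + S * P with hM'def
  -- the shift embedding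
  have hsucc : ∀ j : Fin (N - 1), (j : ℕ) + 1 < N := by
    intro j; have := j.isLt; omega
  set ι : Fin (N - 1) → Fin N := fun j => ⟨(j : ℕ) + 1, hsucc j⟩ with hι
  -- column selection matrix
  set E : Matrix (Fin N × Fin n) (Fin (N - 1) × Fin n) ℝ :=
    fun kz jy => if kz = (ι jy.1, jy.2) then 1 else 0 with hEdef
  set W : Matrix (Fin (N - 1) × Fin n) (Fin (N - 1) × Fin n) ℝ := M' * E with hWdef
  -- entries of W
  have hW_apply : ∀ (i : Fin (N - 1)) (x : Fin n) (j : Fin (N - 1)) (y : Fin n),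
      W (i, x) (j, y) = M' (i, x) (ι j, y) := by
    intro i x j y
    rw [hWdef, Matrix.mul_apply]
    simp [hEdef, mul_ite, mul_one, mul_zero]
  -- entries of M' on high columns
  have hM'_apply : ∀ (i : Fin (N - 1)) (x : Fin n) (b : Fin N) (y : Fin n),
      (i : ℕ) < (b : ℕ) →
      M' (i, x) (b, y) =
        if (b : ℕ) = (i : ℕ) + 1 then -(if x = y then (1 : ℝ) else 0) else 0 := by
    intro i x b y hib
    have hSP : (S * P) (i, x) (b, y) = 0 := by
      rw [Matrix.mul_apply]
      apply Finset.sum_eq_zero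
      rintro ⟨a, u⟩ -
      rcases eq_or_ne (a : ℕ) (i : ℕ) with hai | hai
      · have hPz : P (a, u) (b, y) = 0 := by
          rw [hPdef, Matrix.mul_apply]
          apply Finset.sum_eq_zero
          rintro ⟨c, v⟩ -
          rcases eq_or_ne c b with hcb | hcb
          · subst hcb
            rw [hF a c u v (by omega)]
            ring
          · simp [Matrix.kroneckerMap_apply, Matrix.one_apply, hcb]
        rw [hPz, mul_zero]
      · have : S (i, x) (a, u) = 0 := by
          simp [hSdef, Matrix.kroneckerMap_apply, hL, hai]
        rw [this, zero_mul]
    rw [hM'def]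
    simp only [Matrix.add_apply, Matrix.sub_apply, hSP, add_zero, hQdef,
      Matrix.kroneckerMap_apply, hL, hR]
    have hbi : ¬ ((b : ℕ) = (i : ℕ)) := by omega
    simp only [hbi, if_false, zero_mul, zero_sub]
    rcases eq_or_ne (b : ℕ) ((i : ℕ) + 1) with hb | hb
    · simp [hb, Matrix.one_apply]
    · simp [hb]
  -- W is zero strictly above the diagonal and -1 on diagonal blocks
  have hW_zero : ∀ (i : Fin (N - 1)) (x : Fin n) (j : Fin (N - 1)) (y : Fin n),
      (i : ℕ) < (j : ℕ) → W (i, x) (j, y) = 0 := by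
    intro i x j y hij
    rw [hW_apply, hM'_apply i x (ι j) y (by simp [hι]; omega)]
    have : ¬ ((ι j : ℕ) = (i : ℕ) + 1) := by simp [hι]; omega
    simp [this]
  have hW_diag : ∀ (i : Fin (N - 1)) (x y : Fin n),
      W (i, x) (i, y) = -(if x = y then (1 : ℝ) else 0) := by
    intro i x y
    rw [hW_apply, hM'_apply i x (ι i) y (by simp [hι])]
    simp [hι]
  -- W is block triangular hence its determinant is a product of diagonal block dets
  have hBT : W.BlockTriangular (fun pr => OrderDual.toDual pr.1) := by
    rintro ⟨i, x⟩ ⟨j, y⟩ h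
    exact hW_zero i x j y (by exact_mod_cast h)
  have hdet : W.det ≠ 0 := by
    rw [hBT.det]
    rw [Finset.prod_ne_zero_iff]
    intro a _
    have hblock : W.toSquareBlock (fun pr => OrderDual.toDual pr.1) a =
        -(1 : Matrix { pr : Fin (N - 1) × Fin n // OrderDual.toDual pr.1 = a }
            { pr : Fin (N - 1) × Fin n // OrderDual.toDual pr.1 = a } ℝ) := by
      ext ⟨⟨i1, x1⟩, h1⟩ ⟨⟨i2, x2⟩, h2⟩
      have : i1 = i2 := by
        have := h1.trans h2.symm
        exact_mod_cast this
      subst this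
      simp only [Matrix.toSquareBlock_def, Matrix.of_apply]
      rw [hW_diag]
      simp only [Matrix.neg_apply, Matrix.one_apply]
      by_cases hxy : x1 = x2
      · subst hxy; simp
      · simp [hxy, Subtype.ext_iff, Prod.ext_iff]
    rw [hblock, Matrix.det_neg]
    simp
  have hWinv : W * W⁻¹ = 1 := Matrix.mul_nonsing_inv W (isUnit_iff_ne_zero.mpr hdet)
  set K : Matrix (Fin N × Fin n) (Fin (N - 1) × Fin n) ℝ := E * W⁻¹ with hKdef
  have hK : M' * K = 1 := by
    rw [hKdef, ← Matrix.mul_assoc, ← hWdef, hWinv]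
  -- assemble the right inverse
  set Mbig := Matrix.fromBlocks P (-(1 : Matrix (Fin N × Fin m) (Fin N × Fin m) ℝ)) Q S
    with hMbig
  set G := Matrix.fromBlocks (K * S) K (P * (K * S) - 1) (P * K) with hG
  have hMG : Mbig * G = 1 := by
    have e1 : P * (K * S) + (-(1 : Matrix (Fin N × Fin m) (Fin N × Fin m) ℝ)) *
        (P * (K * S) - 1) = 1 := by
      rw [Matrix.neg_mul, Matrix.one_mul, neg_sub, add_sub_cancel]
    have e2 : P * K + (-(1 : Matrix (Fin N × Fin m) (Fin N × Fin m) ℝ)) * (P * K) = 0 := by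
      rw [Matrix.neg_mul, Matrix.one_mul, add_neg_cancel]
    have e3 : Q * (K * S) + S * (P * (K * S) - 1) = 0 := by
      have h2 : Q * (K * S) + (S * P) * (K * S) = S := by
        rw [← Matrix.add_mul Q (S * P) (K * S), ← hM'def,
          ← Matrix.mul_assoc M' K S, hK, Matrix.one_mul]
      rw [Matrix.mul_sub S (P * (K * S)) 1, Matrix.mul_one,
        ← Matrix.mul_assoc S P (K * S), ← add_sub_assoc, h2, sub_self]
    have e4 : Q * K + S * (P * K) = 1 := by
      rw [← Matrix.mul_assoc S P K, ← Matrix.add_mul Q (S * P) K, ← hM'def, hK]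
    rw [hMbig, hG, Matrix.fromBlocks_multiply, e1, e2, e3, e4, Matrix.fromBlocks_one]
  -- conclude about the rank
  have hle : Mbig.rank ≤ Fintype.card ((Fin N × Fin m) ⊕ (Fin (N - 1) × Fin n)) :=
    Matrix.rank_le_card_height Mbig
  have hge : Fintype.card ((Fin N × Fin m) ⊕ (Fin (N - 1) × Fin n)) ≤ Mbig.rank := by
    have h1 : (Mbig * G).rank ≤ Mbig.rank := Matrix.rank_mul_le_left Mbig G
    rw [hMG, Matrix.rank_one] at h1
    exact h1
  have : Mbig.rank = Fintype.card ((Fin N × Fin m) ⊕ (Fin (N - 1) × Fin n)) :=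
    le_antisymm hle hge
  rw [this]
  simp [Fintype.card_sum, Fintype.card_prod, Fintype.card_fin, Nat.add_comm]
end

section
/- Let A, B, C be real matrices of sizes n×n, n×m, p×n, and P symmetric positive definite of size n. The following are equivalent: (i) there exists F ∈ ℝ^{m×p} such that (A + BFC)ᵀ P (A + BFC) − P ≺ 0; (ii) there exists F ∈ ℝ^{m×p} and a matrix M ∈ ℝ^{(n+m)×m} such that Πᵀ 𝒳(P) Π + M [FC, −I_m] + [FC, −I_m]ᵀ Mᵀ ≺ 0, where Π := [[I_n, 0], [A, B]] and 𝒳(P) := diag(−P, P). -/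
open Matrix

lemma posDef_conj_of_injective {b s : Type*} [Fintype b] [Fintype s]
    {Q : Matrix b b ℝ} (hQ : Q.PosDef) (K : Matrix b s ℝ)
    (hK : Function.Injective K.mulVec) : (Kᵀ * Q * K).PosDef := by
  have herm : (Kᵀ * Q * K).IsHermitian := by
    have := isHermitian_conjTranspose_mul_mul K hQ.1
    simpa using this
  refine Matrix.PosDef.of_dotProduct_mulVec_pos herm (fun x hx => ?_)
  have hKx : K *ᵥ x ≠ 0 := by
    intro h
    exact hx (hK (by simpa using h))
  have key : star x ⬝ᵥ ((Kᵀ * Q * K) *ᵥ x) = star (K *ᵥ x) ⬝ᵥ (Q *ᵥ (K *ᵥ x)) := by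
    simp only [star_trivial]
    rw [← mulVec_mulVec, ← mulVec_mulVec, dotProduct_mulVec, vecMul_transpose]
  rw [key]
  exact hQ.dotProduct_mulVec_pos hKx

lemma posDef_fromBlocks_diag {a d : Type*} [Fintype a] [Fintype d] [DecidableEq a] [DecidableEq d]
    {A : Matrix a a ℝ} {D : Matrix d d ℝ} (hA : A.PosDef) (hD : D.PosDef) :
    (fromBlocks A 0 0 D).PosDef := by
  refine Matrix.PosDef.of_dotProduct_mulVec_pos ?_ ?_
  · unfold Matrix.IsHermitian
    rw [fromBlocks_conjTranspose, hA.1, hD.1]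
    simp
  · intro x hx
    have hxe : x = Sum.elim (x ∘ Sum.inl) (x ∘ Sum.inr) := (Sum.elim_comp_inl_inr x).symm
    rw [star_trivial]
    rw [hxe, fromBlocks_mulVec]
    simp only [Sum.elim_comp_inl, Sum.elim_comp_inr, zero_mulVec, add_zero, zero_add,
      sumElim_dotProduct_sumElim]
    have h1 : x ∘ Sum.inl ≠ 0 ∨ x ∘ Sum.inr ≠ 0 := by
      by_contra h
      push_neg at h
      apply hx
      funext i
      cases i with
      | inl i => exact congrFun h.1 i
      | inr i => exact congrFun h.2 i
    rcases h1 with h1 | h1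
    · have := hA.dotProduct_mulVec_pos h1
      have h2 := hD.posSemidef.dotProduct_mulVec_nonneg (x ∘ Sum.inr)
      rw [star_trivial] at this h2
      linarith
    · have := hD.dotProduct_mulVec_pos h1
      have h2 := hA.posSemidef.dotProduct_mulVec_nonneg (x ∘ Sum.inl)
      rw [star_trivial] at this h2
      linarith

/-- Theorem 1 for `N = 1`: BMI characterization of static output feedback
stabilizability with a fixed Lyapunov matrix `P`, via Finsler's lemma. -/
theorem sof_bmi_characterization {n m p : ℕ}
    (A : Matrix (Fin n) (Fin n) ℝ) (B : Matrix (Fin n) (Fin m) ℝ)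
    (C : Matrix (Fin p) (Fin n) ℝ) (P : Matrix (Fin n) (Fin n) ℝ) (hP : P.PosDef) :
    (∃ F : Matrix (Fin m) (Fin p) ℝ,
        (-((A + B * F * C)ᵀ * P * (A + B * F * C) - P)).PosDef) ↔
    (∃ (F : Matrix (Fin m) (Fin p) ℝ) (M : Matrix (Fin n ⊕ Fin m) (Fin m) ℝ),
        (-((Matrix.fromBlocks (1 : Matrix (Fin n) (Fin n) ℝ) (0 : Matrix (Fin n) (Fin m) ℝ) A B)ᵀ *
            Matrix.fromBlocks (-P) 0 0 P *
            Matrix.fromBlocks (1 : Matrix (Fin n) (Fin n) ℝ) (0 : Matrix (Fin n) (Fin m) ℝ) A B +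
            M * Matrix.fromCols (F * C) (-(1 : Matrix (Fin m) (Fin m) ℝ)) +
            (Matrix.fromCols (F * C) (-(1 : Matrix (Fin m) (Fin m) ℝ)))ᵀ * Mᵀ)).PosDef) := by
  have hPt : Pᵀ = P := by simpa using hP.1.eq
  constructor
  · rintro ⟨F, hF⟩
    refine ⟨F, fromRows (Aᵀ * P * B - (F * C)ᵀ) (Bᵀ * P * B + 1), ?_⟩
    have hBPB : (Bᵀ * P * B).PosSemidef := by
      have := hP.posSemidef.conjTranspose_mul_mul_same B
      simpa using this
    have hE : (fromBlocks (-((A + B * F * C)ᵀ * P * (A + B * F * C) - P)) 0 0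
        (Bᵀ * P * B + 1 + 1) : Matrix (Fin n ⊕ Fin m) (Fin n ⊕ Fin m) ℝ).PosDef := by
      apply posDef_fromBlocks_diag hF
      exact (Matrix.PosDef.posSemidef_add hBPB Matrix.PosDef.one).add_posSemidef
        Matrix.PosSemidef.one
    have hVU : (fromBlocks 1 0 (F * C) 1 : Matrix (Fin n ⊕ Fin m) (Fin n ⊕ Fin m) ℝ) *
        fromBlocks 1 0 (-(F * C)) 1 = 1 := by
      rw [fromBlocks_multiply]
      simp [fromBlocks_one]
    have hUinj : Function.Injective
        (fromBlocks 1 0 (-(F * C)) 1 : Matrix (Fin n ⊕ Fin m) (Fin n ⊕ Fin m) ℝ).mulVec := by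
      intro x y h
      have h2 := congrArg (fromBlocks 1 0 (F * C) 1 :
        Matrix (Fin n ⊕ Fin m) (Fin n ⊕ Fin m) ℝ).mulVec h
      rwa [mulVec_mulVec, mulVec_mulVec, hVU, one_mulVec, one_mulVec] at h2
    have key : -((Matrix.fromBlocks (1 : Matrix (Fin n) (Fin n) ℝ)
            (0 : Matrix (Fin n) (Fin m) ℝ) A B)ᵀ *
            Matrix.fromBlocks (-P) 0 0 P *
            Matrix.fromBlocks (1 : Matrix (Fin n) (Fin n) ℝ) (0 : Matrix (Fin n) (Fin m) ℝ) A B +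
            fromRows (Aᵀ * P * B - (F * C)ᵀ) (Bᵀ * P * B + 1) *
              Matrix.fromCols (F * C) (-(1 : Matrix (Fin m) (Fin m) ℝ)) +
            (Matrix.fromCols (F * C) (-(1 : Matrix (Fin m) (Fin m) ℝ)))ᵀ *
              (fromRows (Aᵀ * P * B - (F * C)ᵀ) (Bᵀ * P * B + 1))ᵀ) =
        (fromBlocks 1 0 (-(F * C)) 1 : Matrix (Fin n ⊕ Fin m) (Fin n ⊕ Fin m) ℝ)ᵀ *
          fromBlocks (-((A + B * F * C)ᵀ * P * (A + B * F * C) - P)) 0 0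
            (Bᵀ * P * B + 1 + 1) *
          fromBlocks 1 0 (-(F * C)) 1 := by
      simp only [fromBlocks_transpose, transpose_one, transpose_zero, transpose_neg,
        transpose_mul, transpose_add, transpose_sub, transpose_transpose, hPt,
        transpose_fromCols, transpose_fromRows, fromRows_mul_fromCols,
        fromBlocks_multiply, fromBlocks_add, fromBlocks_neg,
        Matrix.mul_one, Matrix.one_mul, Matrix.mul_zero, Matrix.zero_mul,
        add_zero, zero_add, Matrix.mul_neg, Matrix.neg_mul, neg_zero]
      rw [fromBlocks_inj]
      refine ⟨?_, ?_, ?_, ?_⟩ <;>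
        simp only [Matrix.mul_add, Matrix.add_mul, Matrix.sub_mul, Matrix.mul_sub,
          Matrix.mul_one, Matrix.one_mul, Matrix.mul_neg, Matrix.neg_mul, Matrix.mul_assoc,
          Matrix.mul_zero, Matrix.zero_mul, add_zero, zero_add, sub_eq_add_neg, neg_add,
          neg_neg] <;>
        abel
    rw [key]
    exact posDef_conj_of_injective hE _ hUinj
  · rintro ⟨F, M, h⟩
    refine ⟨F, ?_⟩
    have hKinj : Function.Injective
        (fromRows (1 : Matrix (Fin n) (Fin n) ℝ) (F * C)).mulVec := by
      intro x y hxy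
      funext i
      have := congrFun hxy (Sum.inl i)
      simpa [fromRows_mulVec] using this
    have hWK : Matrix.fromCols (F * C) (-(1 : Matrix (Fin m) (Fin m) ℝ)) *
        fromRows (1 : Matrix (Fin n) (Fin n) ℝ) (F * C) = 0 := by
      rw [fromCols_mul_fromRows]
      simp
    have key : (fromRows (1 : Matrix (Fin n) (Fin n) ℝ) (F * C))ᵀ *
        (-((Matrix.fromBlocks (1 : Matrix (Fin n) (Fin n) ℝ)
            (0 : Matrix (Fin n) (Fin m) ℝ) A B)ᵀ *
            Matrix.fromBlocks (-P) 0 0 P *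
            Matrix.fromBlocks (1 : Matrix (Fin n) (Fin n) ℝ) (0 : Matrix (Fin n) (Fin m) ℝ) A B +
            M * Matrix.fromCols (F * C) (-(1 : Matrix (Fin m) (Fin m) ℝ)) +
            (Matrix.fromCols (F * C) (-(1 : Matrix (Fin m) (Fin m) ℝ)))ᵀ * Mᵀ)) *
        fromRows (1 : Matrix (Fin n) (Fin n) ℝ) (F * C) =
        -((A + B * F * C)ᵀ * P * (A + B * F * C) - P) := by
      have h1 : (fromRows (1 : Matrix (Fin n) (Fin n) ℝ) (F * C))ᵀ *
          (M * Matrix.fromCols (F * C) (-(1 : Matrix (Fin m) (Fin m) ℝ))) *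
          fromRows (1 : Matrix (Fin n) (Fin n) ℝ) (F * C) = 0 := by
        rw [Matrix.mul_assoc, Matrix.mul_assoc, hWK, Matrix.mul_zero, Matrix.mul_zero]
      have h2 : (fromRows (1 : Matrix (Fin n) (Fin n) ℝ) (F * C))ᵀ *
          ((Matrix.fromCols (F * C) (-(1 : Matrix (Fin m) (Fin m) ℝ)))ᵀ * Mᵀ) *
          fromRows (1 : Matrix (Fin n) (Fin n) ℝ) (F * C) = 0 := by
        rw [← Matrix.mul_assoc, ← transpose_mul, hWK, transpose_zero, Matrix.zero_mul,
          Matrix.zero_mul]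
      simp only [Matrix.mul_neg, Matrix.neg_mul, Matrix.mul_add, Matrix.add_mul]
      rw [h1, h2, add_zero, add_zero]
      congr 1
      simp only [Matrix.mul_assoc, fromBlocks_transpose, transpose_one, transpose_zero,
        transpose_neg, transpose_mul, transpose_transpose, hPt, transpose_fromRows,
        transpose_add, fromBlocks_mul_fromRows, fromCols_mul_fromRows,
        Matrix.mul_one, Matrix.one_mul, Matrix.mul_zero, Matrix.zero_mul, add_zero, zero_add,
        Matrix.mul_neg, Matrix.neg_mul]
      simp only [Matrix.mul_add, Matrix.add_mul, Matrix.sub_mul, Matrix.mul_sub,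
        Matrix.mul_one, Matrix.one_mul, Matrix.mul_neg, Matrix.neg_mul, Matrix.mul_assoc,
        Matrix.mul_zero, Matrix.zero_mul, add_zero, zero_add, sub_eq_add_neg, neg_add,
        neg_neg]
      abel
    have := posDef_conj_of_injective h _ hKinj
    rwa [key] at this
end
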